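/- For all x in (0, π), t in [0,1], and real N ≥ 3, sin(t·x) − t·x·cos(t·x) ≥ t^N·(sin(x) − x·cos(x)). -/

import Mathlib

open Real

private lemma hg_deriv (u : ℝ) :
    HasDerivAt (fun u => Real.sin u - u * Real.cos u) (u * Real.sin u) u := by
  have h := (Real.hasDerivAt_sin u).sub ((hasDerivAt_id u).mul (Real.hasDerivAt_cos u))
  refine h.congr_deriv ?_; simp [id]

private lemma g_nonneg {u : ℝ} (h0 : 0 ≤ u) (h1 : u ≤ Real.pi) :
    0 ≤ Real.sin u - u * Real.cos u := by
  have hmono : MonotoneOn (fun u => Real.sin u - u * Real.cos u) (Set.Icc 0 Real.pi) := by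
    apply monotoneOn_of_deriv_nonneg (convex_Icc 0 Real.pi)
    · exact Continuous.continuousOn (by continuity)
    · intro v hv
      exact (hg_deriv v).differentiableAt.differentiableWithinAt
    · intro v hv
      rw [(hg_deriv v).deriv]
      rw [interior_Icc] at hv
      exact mul_nonneg hv.1.le (Real.sin_nonneg_of_nonneg_of_le_pi hv.1.le hv.2.le)
  have := hmono (Set.left_mem_Icc.2 Real.pi_pos.le) (Set.mem_Icc.2 ⟨h0, h1⟩) h0
  simpa using this

private lemma hphi_deriv (u : ℝ) :
    HasDerivAt (fun u => 3 * (Real.sin u - u * Real.cos u) - u ^ 2 * Real.sin u)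
      (u * (Real.sin u - u * Real.cos u)) u := by
  have h := ((hg_deriv u).const_mul 3).sub ((hasDerivAt_pow 2 u).mul (Real.hasDerivAt_sin u))
  refine h.congr_deriv ?_; ring

private lemma phi_nonneg {u : ℝ} (h0 : 0 ≤ u) (h1 : u ≤ Real.pi) :
    u ^ 2 * Real.sin u ≤ 3 * (Real.sin u - u * Real.cos u) := by
  have hmono : MonotoneOn (fun u => 3 * (Real.sin u - u * Real.cos u) - u ^ 2 * Real.sin u)
      (Set.Icc 0 Real.pi) := by
    apply monotoneOn_of_deriv_nonneg (convex_Icc 0 Real.pi)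
    · exact Continuous.continuousOn (by continuity)
    · intro v hv
      exact (hphi_deriv v).differentiableAt.differentiableWithinAt
    · intro v hv
      rw [(hphi_deriv v).deriv]
      rw [interior_Icc] at hv
      exact mul_nonneg hv.1.le (g_nonneg hv.1.le hv.2.le)
  have := hmono (Set.left_mem_Icc.2 Real.pi_pos.le) (Set.mem_Icc.2 ⟨h0, h1⟩) h0
  simp only [Real.sin_zero, Real.cos_zero] at this
  nlinarith [this]

private lemma cubic_case {x t : ℝ} (hx0 : 0 < x) (hxpi : x < Real.pi)
    (ht0 : 0 < t) (ht1 : t ≤ 1) :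
    Real.sin (t * x) - t * x * Real.cos (t * x) ≥
      t ^ 3 * (Real.sin x - x * Real.cos x) := by
  set F : ℝ → ℝ := fun s => (Real.sin (s * x) - s * x * Real.cos (s * x)) / s ^ 3 with hF
  have hder : ∀ s : ℝ, s ≠ 0 → HasDerivAt F
      ((s * x * x * Real.sin (s * x) * s ^ 3 -
        (Real.sin (s * x) - s * x * Real.cos (s * x)) * (3 * s ^ 2)) / (s ^ 3) ^ 2) s := by
    intro s hs
    have hn : HasDerivAt (fun s : ℝ => Real.sin (s * x) - s * x * Real.cos (s * x))
        (s * x * x * Real.sin (s * x)) s := by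
      have := (hg_deriv (s * x)).comp s ((hasDerivAt_id s).mul_const x)
      refine this.congr_deriv ?_; simp; ring
    have hd : HasDerivAt (fun s : ℝ => s ^ 3) (3 * s ^ 2) s := by
      simpa using hasDerivAt_pow 3 s
    exact hn.div hd (pow_ne_zero 3 hs)
  have hanti : AntitoneOn F (Set.Icc t 1) := by
    apply antitoneOn_of_deriv_nonpos (convex_Icc t 1)
    · intro s hs
      have hs0 : s ≠ 0 := ne_of_gt (lt_of_lt_of_le ht0 hs.1)
      exact (hder s hs0).continuousAt.continuousWithinAt
    · intro s hs
      rw [interior_Icc] at hs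
      have hs0 : (0:ℝ) < s := lt_trans ht0 hs.1
      exact (hder s hs0.ne').differentiableAt.differentiableWithinAt
    · intro s hs
      rw [interior_Icc] at hs
      have hs0 : (0:ℝ) < s := lt_trans ht0 hs.1
      rw [(hder s hs0.ne').deriv]
      apply div_nonpos_of_nonpos_of_nonneg _ (by positivity)
      have hsx0 : 0 ≤ s * x := by positivity
      have hsxpi : s * x ≤ Real.pi := by nlinarith [hs.2, hx0]
      have hphi := phi_nonneg hsx0 hsxpi
      nlinarith [sq_nonneg s, mul_pos hs0 hs0]
  have h1 : F t ≥ F 1 := hanti (Set.mem_Icc.2 ⟨le_refl t, ht1⟩) (Set.right_mem_Icc.2 ht1) ht1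
  have hF1 : F 1 = Real.sin x - x * Real.cos x := by simp [hF]
  rw [hF1] at h1
  have ht3 : (0:ℝ) < t ^ 3 := by positivity
  calc Real.sin (t * x) - t * x * Real.cos (t * x) = F t * t ^ 3 := by
        simp only [hF]
        field_simp
    _ ≥ (Real.sin x - x * Real.cos x) * t ^ 3 := by
        exact mul_le_mul_of_nonneg_right h1 ht3.le
    _ = t ^ 3 * (Real.sin x - x * Real.cos x) := by ring

theorem stmt_1 (x t N : ℝ) (hx0 : 0 < x) (hxpi : x < Real.pi)
    (ht0 : 0 ≤ t) (ht1 : t ≤ 1) (hN : 3 ≤ N) :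
    Real.sin (t * x) - t * x * Real.cos (t * x) ≥
      t ^ N * (Real.sin x - x * Real.cos x) := by
  rcases eq_or_lt_of_le ht0 with h | h
  · rw [← h]
    rw [Real.zero_rpow (by linarith : N ≠ 0)]
    simp
  · have hgx : 0 ≤ Real.sin x - x * Real.cos x := g_nonneg hx0.le hxpi.le
    have hrpow : t ^ N ≤ t ^ (3:ℝ) := Real.rpow_le_rpow_of_exponent_ge h ht1 hN
    have h3 : t ^ (3:ℝ) = t ^ (3:ℕ) := by
      rw [← Real.rpow_natCast t 3]; norm_num
    have := cubic_case hx0 hxpi h ht1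
    have hle : t ^ N * (Real.sin x - x * Real.cos x) ≤
        t ^ (3:ℕ) * (Real.sin x - x * Real.cos x) := by
      rw [← h3]; exact mul_le_mul_of_nonneg_right hrpow hgx
    linarith
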